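/- Fix $n \in \mathbb{N}$ with $n \ge 2$. Then the operator $J_n$ is symmetric but not essentially self-adjoint, and both of its deficiency indices equal $1$: $\dim_{\mathbb{C}} \ker(J_n^* - i\,\mathrm{id}) = 1$ and $\dim_{\mathbb{C}} \ker(J_n^* + i\,\mathrm{id}) = 1$. -/

import Mathlib

noncomputable section

open scoped ComplexInnerProductSpace

/-- The Hilbert space `ℓ²(ℕ; ℂ)`. -/
abbrev H1 : Type := lp (fun _ : ℕ => ℂ) 2

/-- `β(m,n) = (1/2)·√(m+1)·(1-m-n)`. -/
def beta (m n : ℕ) : ℝ := (1 / 2) * Real.sqrt ((m : ℝ) + 1) * (1 - (m : ℝ) - (n : ℝ))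

/-- The formal Jacobi action in the row `n`:
`(J_n u)(m) = β(m,n) u(m+1) + β(m-1,n) u(m-1)`, with the convention `β(-1,n) = 0`. -/
def jacobiActRow (n : ℕ) (u : ℕ → ℂ) : ℕ → ℂ := fun m =>
  (beta m n : ℂ) * u (m + 1) +
    (if m = 0 then 0 else (beta (m - 1) n : ℂ) * u (m - 1))

/-! ### Auxiliary facts about `β` -/

/-- `bb n m = |β(m,n)|` (for `n ≥ 2`). -/
def bb (n m : ℕ) : ℝ := (1/2) * Real.sqrt ((m:ℝ)+1) * ((m:ℝ) + (n:ℝ) - 1)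

lemma beta_eq_neg_bb (n m : ℕ) : beta m n = - bb n m := by unfold beta bb; ring

lemma bb_pos {n : ℕ} (hn : 2 ≤ n) (m : ℕ) : 0 < bb n m := by
  have h1 : (0:ℝ) < Real.sqrt ((m:ℝ)+1) := Real.sqrt_pos.mpr (by positivity)
  have h2 : (2:ℝ) ≤ (n:ℝ) := by exact_mod_cast hn
  have h3 : (0:ℝ) < (m:ℝ) + (n:ℝ) - 1 := by linarith [Nat.cast_nonneg (α := ℝ) m]
  have : (0:ℝ) < (1/2) * Real.sqrt ((m:ℝ)+1) := by linarith
  unfold bb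
  exact mul_pos this h3

lemma bb_logconcave {n : ℕ} (hn : 2 ≤ n) (k : ℕ) : bb n k * bb n (k+2) ≤ bb n (k+1) ^ 2 := by
  have h2 : (2:ℝ) ≤ (n:ℝ) := by exact_mod_cast hn
  have hm : (0:ℝ) ≤ (k:ℝ) := Nat.cast_nonneg k
  have hs : Real.sqrt ((k:ℝ)+1) * Real.sqrt ((k:ℝ)+2+1) ≤ (k:ℝ) + 2 := by
    rw [← Real.sqrt_mul (by linarith)]
    calc Real.sqrt (((k:ℝ)+1) * ((k:ℝ)+2+1)) ≤ Real.sqrt (((k:ℝ)+2)^2) :=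
          Real.sqrt_le_sqrt (by nlinarith)
      _ = (k:ℝ)+2 := Real.sqrt_sq (by linarith)
  have hsq : Real.sqrt ((k:ℝ)+1+1) ^ 2 = (k:ℝ) + 2 := by
    rw [Real.sq_sqrt (by linarith)]; ring
  unfold bb
  push_cast
  nlinarith [Real.sqrt_nonneg ((k:ℝ)+1), Real.sqrt_nonneg ((k:ℝ)+2+1), Real.sqrt_nonneg ((k:ℝ)+1+1),
    mul_nonneg (Real.sqrt_nonneg ((k:ℝ)+1)) (Real.sqrt_nonneg ((k:ℝ)+2+1))]

lemma bb_ratio {n : ℕ} (hn : 2 ≤ n) (m : ℕ) : bb n (m+1) ≤ 4 * bb n m := by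
  have h2 : (2:ℝ) ≤ (n:ℝ) := by exact_mod_cast hn
  have hm : (0:ℝ) ≤ (m:ℝ) := Nat.cast_nonneg m
  have hs : Real.sqrt ((m:ℝ)+1+1) ≤ 2 * Real.sqrt ((m:ℝ)+1) := by
    have h4 : (2:ℝ) * Real.sqrt ((m:ℝ)+1) = Real.sqrt (4*((m:ℝ)+1)) := by
      rw [show (4:ℝ)*((m:ℝ)+1) = (2:ℝ)^2 * ((m:ℝ)+1) by ring, Real.sqrt_mul (by positivity),
        Real.sqrt_sq (by norm_num)]
    rw [h4]
    exact Real.sqrt_le_sqrt (by linarith)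
  unfold bb
  push_cast
  nlinarith [Real.sqrt_nonneg ((m:ℝ)+1), Real.sqrt_nonneg ((m:ℝ)+1+1)]

lemma bb_lower {n : ℕ} (hn : 2 ≤ n) (m : ℕ) :
    (1/2) * (((m:ℝ)+1) * Real.sqrt ((m:ℝ)+1)) ≤ bb n m := by
  have h2 : (2:ℝ) ≤ (n:ℝ) := by exact_mod_cast hn
  have := Real.sqrt_nonneg ((m:ℝ)+1)
  unfold bb; nlinarith [Nat.cast_nonneg (α := ℝ) m]

lemma beta_neg {n : ℕ} (hn : 2 ≤ n) (m : ℕ) : beta m n < 0 := by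
  rw [beta_eq_neg_bb]; linarith [bb_pos hn m]

lemma betaC_ne {n : ℕ} (hn : 2 ≤ n) (m : ℕ) : ((beta m n : ℝ) : ℂ) ≠ 0 := by
  exact_mod_cast Complex.ofReal_ne_zero.mpr (ne_of_lt (beta_neg hn m))

lemma normβ {n : ℕ} (hn : 2 ≤ n) (m : ℕ) : ‖((beta m n : ℝ) : ℂ)‖ = bb n m := by
  rw [Complex.norm_real, Real.norm_eq_abs, abs_of_neg (beta_neg hn m), beta_eq_neg_bb]; ring

/-! ### The formal eigenvector sequence -/

def solP (n : ℕ) (c : ℂ) : ℕ → ℂ × ℂ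
  | 0 => (1, c / ((beta 0 n : ℝ) : ℂ))
  | (k+1) => ((solP n c k).2,
      (c * (solP n c k).2 - ((beta k n : ℝ) : ℂ) * (solP n c k).1) / ((beta (k+1) n : ℝ) : ℂ))

def sol (n : ℕ) (c : ℂ) (k : ℕ) : ℂ := (solP n c k).1

variable {n : ℕ} {c : ℂ}

lemma sol_zero : sol n c 0 = 1 := rfl
lemma sol_one : sol n c 1 = c / ((beta 0 n : ℝ) : ℂ) := rfl
lemma sol_rec (k : ℕ) : sol n c (k+2)
    = (c * sol n c (k+1) - ((beta k n : ℝ):ℂ) * sol n c k) / ((beta (k+1) n : ℝ):ℂ) := by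
  show (solP n c (k+2)).1 = _
  rw [show solP n c (k+2) = ((solP n c (k+1)).2, _) from rfl]
  rfl

lemma sol_eigen (hn : 2 ≤ n) (k : ℕ) : jacobiActRow n (sol n c) k = c * sol n c k := by
  cases k with
  | zero =>
      simp only [jacobiActRow, if_pos rfl, add_zero, sol_one, sol_zero, zero_add, mul_one]
      rw [mul_div_cancel₀ _ (betaC_ne hn 0)]; simp
  | succ k =>
      simp only [jacobiActRow, Nat.succ_ne_zero, if_false, Nat.add_sub_cancel]
      rw [sol_rec, mul_div_cancel₀ _ (betaC_ne hn (k+1))]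
      ring

/-! ### The `ℓ²` bound for `sol` -/

def gg (n : ℕ) (c : ℂ) (k : ℕ) : ℝ := ‖sol n c k‖ * Real.sqrt (bb n k)

lemma gg_nonneg (k : ℕ) : 0 ≤ gg n c k := mul_nonneg (norm_nonneg _) (Real.sqrt_nonneg _)

lemma gg_step (hn : 2 ≤ n) (hc : ‖c‖ ≤ 1) (k : ℕ) :
    gg n c (k+2) ≤ gg n c k + (2 / bb n (k+1)) * gg n c (k+1) := by
  have hb0 := bb_pos hn k; have hb1 := bb_pos hn (k+1); have hb2 := bb_pos hn (k+2)
  have hg1 := norm_nonneg (sol n c (k+1)); have hg0 := norm_nonneg (sol n c k)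
  have hnorm : ‖sol n c (k+2)‖ ≤ (‖sol n c (k+1)‖ + bb n k * ‖sol n c k‖) / bb n (k+1) := by
    rw [sol_rec, norm_div, normβ hn]
    gcongr
    calc ‖c * sol n c (k+1) - (beta k n : ℂ) * sol n c k‖
        ≤ ‖c * sol n c (k+1)‖ + ‖(beta k n : ℂ) * sol n c k‖ := norm_sub_le _ _
      _ ≤ ‖sol n c (k+1)‖ + bb n k * ‖sol n c k‖ := by
          rw [norm_mul, norm_mul, normβ hn]
          have : ‖c‖ * ‖sol n c (k+1)‖ ≤ 1 * ‖sol n c (k+1)‖ := by gcongr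
          linarith
  have hA : Real.sqrt (bb n (k+2)) ≤ 2 * Real.sqrt (bb n (k+1)) := by
    have : (2:ℝ) * Real.sqrt (bb n (k+1)) = Real.sqrt (4 * bb n (k+1)) := by
      rw [show (4:ℝ) * bb n (k+1) = 2^2 * bb n (k+1) by ring, Real.sqrt_mul (by positivity),
        Real.sqrt_sq (by norm_num)]
    rw [this]
    exact Real.sqrt_le_sqrt (bb_ratio hn (k+1))
  have hB : bb n k * Real.sqrt (bb n (k+2)) ≤ Real.sqrt (bb n k) * bb n (k+1) := by
    have e1 : bb n k * Real.sqrt (bb n (k+2))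
        = Real.sqrt (bb n k) * Real.sqrt (bb n k * bb n (k+2)) := by
      rw [Real.sqrt_mul hb0.le, ← mul_assoc, Real.mul_self_sqrt hb0.le]
    rw [e1]
    gcongr
    calc Real.sqrt (bb n k * bb n (k+2)) ≤ Real.sqrt (bb n (k+1)^2) :=
          Real.sqrt_le_sqrt (bb_logconcave hn k)
      _ = bb n (k+1) := Real.sqrt_sq hb1.le
  calc gg n c (k+2) = ‖sol n c (k+2)‖ * Real.sqrt (bb n (k+2)) := rfl
    _ ≤ ((‖sol n c (k+1)‖ + bb n k * ‖sol n c k‖) / bb n (k+1)) * Real.sqrt (bb n (k+2)) := by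
        gcongr
    _ = (‖sol n c (k+1)‖ * Real.sqrt (bb n (k+2))
          + ‖sol n c k‖ * (bb n k * Real.sqrt (bb n (k+2)))) / bb n (k+1) := by ring
    _ ≤ (‖sol n c (k+1)‖ * (2 * Real.sqrt (bb n (k+1)))
          + ‖sol n c k‖ * (Real.sqrt (bb n k) * bb n (k+1))) / bb n (k+1) := by
        gcongr
    _ = gg n c k + (2 / bb n (k+1)) * gg n c (k+1) := by
        unfold gg; field_simp; ring

def hh (n : ℕ) (c : ℂ) (k : ℕ) : ℝ := gg n c k + gg n c (k+1)

lemma hh_nonneg (k : ℕ) : 0 ≤ hh n c k := add_nonneg (gg_nonneg k) (gg_nonneg (k+1))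

lemma hh_step (hn : 2 ≤ n) (hc : ‖c‖ ≤ 1) (k : ℕ) :
    hh n c (k+1) ≤ (1 + 2 / bb n (k+1)) * hh n c k := by
  have h1 := gg_step hn hc k
  have h2 := gg_nonneg (n := n) (c := c) k
  have h3 := gg_nonneg (n := n) (c := c) (k+1)
  have h4 : (0:ℝ) ≤ 2 / bb n (k+1) := div_nonneg (by norm_num) (bb_pos hn (k+1)).le
  unfold hh; nlinarith [mul_nonneg h4 h2]

lemma hh_bound (hn : 2 ≤ n) (hc : ‖c‖ ≤ 1) (m : ℕ) :
    hh n c m ≤ hh n c 0 * Real.exp (∑ j ∈ Finset.range m, 2 / bb n (j+1)) := by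
  induction m with
  | zero => simp
  | succ m ih =>
      have hb := bb_pos hn (m+1)
      have h4 : (0:ℝ) ≤ 2 / bb n (m+1) := by positivity
      calc hh n c (m+1) ≤ (1 + 2 / bb n (m+1)) * hh n c m := hh_step hn hc m
        _ ≤ Real.exp (2 / bb n (m+1)) * hh n c m := by
            have := Real.add_one_le_exp (2 / bb n (m+1))
            nlinarith [hh_nonneg (n := n) (c := c) m]
        _ ≤ Real.exp (2 / bb n (m+1))
              * (hh n c 0 * Real.exp (∑ j ∈ Finset.range m, 2 / bb n (j+1))) := by
            have := Real.exp_pos (2 / bb n (m+1)); nlinarith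
        _ = hh n c 0 * Real.exp (∑ j ∈ Finset.range (m+1), 2 / bb n (j+1)) := by
            rw [Finset.sum_range_succ, Real.exp_add]; ring

lemma rpow32 (m : ℕ) : ((m:ℝ)+1) ^ ((3:ℝ)/2) = ((m:ℝ)+1) * Real.sqrt ((m:ℝ)+1) := by
  have hp : (0:ℝ) < (m:ℝ)+1 := by positivity
  rw [show ((3:ℝ)/2) = (1:ℝ) + 1/2 by norm_num, Real.rpow_add hp, Real.rpow_one,
    Real.sqrt_eq_rpow]

lemma inv_bb_le (hn : 2 ≤ n) (m : ℕ) : 1 / bb n m ≤ 2 * (1 / ((m:ℝ)+1) ^ ((3:ℝ)/2)) := by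
  have h1 := bb_lower hn m
  have hX : (0:ℝ) < ((m:ℝ)+1) * Real.sqrt ((m:ℝ)+1) := by
    have : (0:ℝ) < Real.sqrt ((m:ℝ)+1) := Real.sqrt_pos.mpr (by positivity)
    positivity
  rw [rpow32]
  calc 1 / bb n m ≤ 1 / ((1/2) * (((m:ℝ)+1) * Real.sqrt ((m:ℝ)+1))) :=
        one_div_le_one_div_of_le (by linarith) h1
    _ = 2 * (1 / (((m:ℝ)+1) * Real.sqrt ((m:ℝ)+1))) := by
        rw [show (1/2) * (((m:ℝ)+1) * Real.sqrt ((m:ℝ)+1))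
            = (((m:ℝ)+1) * Real.sqrt ((m:ℝ)+1))/2 by ring, one_div_div]
        ring

lemma summable_inv32 : Summable (fun m : ℕ => 1 / ((m:ℝ)+1) ^ ((3:ℝ)/2)) := by
  have := (Real.summable_one_div_nat_rpow (p := 3/2)).mpr (by norm_num)
  have h2 := (summable_nat_add_iff 1).mpr this
  simpa using h2

lemma summable_inv_bb (hn : 2 ≤ n) : Summable (fun m : ℕ => 2 / bb n (m+1)) := by
  have h := ((summable_nat_add_iff 1).mpr (summable_inv32.mul_left 4))
  apply Summable.of_nonneg_of_le
    (fun m => div_nonneg (by norm_num) (bb_pos hn (m+1)).le) (fun m => ?_) h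
  have h5 := inv_bb_le hn (m+1)
  have e : (2:ℝ)/bb n (m+1) = 2*(1/bb n (m+1)) := by ring
  rw [e]
  push_cast at h5 ⊢
  linarith

lemma gg_bound (hn : 2 ≤ n) (hc : ‖c‖ ≤ 1) (k : ℕ) :
    gg n c k ≤ hh n c 0 * Real.exp (∑' m : ℕ, 2 / bb n (m+1)) := by
  have h1 : gg n c k ≤ hh n c k := le_add_of_nonneg_right (gg_nonneg (k+1))
  refine h1.trans ((hh_bound hn hc k).trans ?_)
  have hsum := summable_inv_bb (n := n) hn
  have hle : (∑ j ∈ Finset.range k, 2 / bb n (j+1)) ≤ ∑' m : ℕ, 2 / bb n (m+1) :=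
    Summable.sum_le_tsum _ (fun m _ => div_nonneg (by norm_num) (bb_pos hn (m+1)).le) hsum
  have := hh_nonneg (n := n) (c := c) 0
  gcongr

lemma sol_sq_le (hn : 2 ≤ n) (hc : ‖c‖ ≤ 1) (k : ℕ) :
    ‖sol n c k‖^2 ≤ (hh n c 0 * Real.exp (∑' m : ℕ, 2 / bb n (m+1)))^2 * 2
      * (1 / ((k:ℝ)+1) ^ ((3:ℝ)/2)) := by
  set K := hh n c 0 * Real.exp (∑' m : ℕ, 2 / bb n (m+1)) with hKdef
  have hb := bb_pos hn k
  have h1 : ‖sol n c k‖^2 * bb n k = (gg n c k)^2 := by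
    unfold gg; rw [mul_pow, Real.sq_sqrt hb.le]
  have h2 : (gg n c k)^2 ≤ K^2 := pow_le_pow_left₀ (gg_nonneg k) (gg_bound hn hc k) 2
  have h3 : ‖sol n c k‖^2 ≤ K^2 * (1 / bb n k) := by
    rw [show K^2 * (1/bb n k) = K^2 / bb n k by ring, le_div_iff₀ hb]
    calc ‖sol n c k‖^2 * bb n k = (gg n c k)^2 := h1
      _ ≤ K^2 := h2
  refine h3.trans ?_
  have h4 := inv_bb_le hn k
  have hK2 : (0:ℝ) ≤ K^2 := sq_nonneg K
  calc K^2 * (1 / bb n k) ≤ K^2 * (2 * (1 / ((k:ℝ)+1) ^ ((3:ℝ)/2))) := by gcongr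
    _ = K^2 * 2 * (1 / ((k:ℝ)+1) ^ ((3:ℝ)/2)) := by ring

lemma sol_memlp (hn : 2 ≤ n) (hc : ‖c‖ ≤ 1) : Memℓp (sol n c) 2 := by
  apply memℓp_gen
  have hs : Summable (fun k : ℕ => ‖sol n c k‖^2) := by
    apply Summable.of_nonneg_of_le (fun k => sq_nonneg _) (sol_sq_le hn hc)
    exact summable_inv32.mul_left _
  simpa using hs

/-! ### Summability and rearrangement of finitely supported sums -/

lemma summable_of_finsupp {f : ℕ → ℂ} (h : {m | f m ≠ 0}.Finite) : Summable f :=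
  summable_of_ne_finset_zero (s := h.toFinset)
    (fun _ hb => not_not.mp (fun hfb => hb (h.mem_toFinset.mpr hfb)))

lemma rearrange (n : ℕ) (y x : ℕ → ℂ) (hx : {m | x m ≠ 0}.Finite) :
    ∑' m, (starRingEnd ℂ) (y m) * jacobiActRow n x m
      = ∑' m, (starRingEnd ℂ) (jacobiActRow n y m) * x m := by
  set A : ℕ → ℂ := fun m => (beta m n : ℂ) * (starRingEnd ℂ) (y m) * x (m+1) with hA
  set B : ℕ → ℂ := fun m =>
    if m = 0 then 0 else (beta (m-1) n : ℂ) * (starRingEnd ℂ) (y m) * x (m-1) with hB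
  set A' : ℕ → ℂ := fun m => (beta m n : ℂ) * (starRingEnd ℂ) (y (m+1)) * x m with hA'
  set B' : ℕ → ℂ := fun m =>
    if m = 0 then 0 else (beta (m-1) n : ℂ) * (starRingEnd ℂ) (y (m-1)) * x m with hB'
  have hsA : Summable A := by
    apply summable_of_finsupp
    apply (hx.preimage ((add_left_injective 1).injOn)).subset
    intro m hm
    simp only [hA, Set.mem_setOf_eq] at hm ⊢
    intro h0
    have hx0 : x (m+1) = 0 := h0
    simp [hx0] at hm
  have hsA' : Summable A' := by
    apply summable_of_finsupp
    apply hx.subset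
    intro m hm h0
    apply hm; simp [hA', h0]
  have hsB' : Summable B' := by
    apply summable_of_finsupp
    apply hx.subset
    intro m hm h0
    apply hm; simp only [hB']
    split_ifs with h
    · rfl
    · simp [h0]
  have hsB : Summable B := by
    apply summable_of_finsupp
    apply (hx.image (fun j => j + 1)).subset
    intro m hm
    simp only [hB, Set.mem_setOf_eq] at hm
    by_cases h : m = 0
    · exact absurd (by simp [h]) hm
    · refine ⟨m - 1, ?_, Nat.succ_pred_eq_of_ne_zero h⟩
      intro h0; apply hm; rw [if_neg h]; simp [h0]
  have hBA' : ∑' m, B m = ∑' m, A' m := by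
    rw [Summable.tsum_eq_zero_add hsB]
    have h0 : B 0 = 0 := by simp [hB]
    rw [h0, zero_add]
    exact tsum_congr fun k => by
      simp only [hB, hA', if_neg (Nat.succ_ne_zero k), Nat.succ_sub_one]
  have hB'A : ∑' m, B' m = ∑' m, A m := by
    rw [Summable.tsum_eq_zero_add hsB']
    have h0 : B' 0 = 0 := by simp [hB']
    rw [h0, zero_add]
    exact tsum_congr fun k => by
      simp only [hB', hA, if_neg (Nat.succ_ne_zero k), Nat.succ_sub_one]
  have hL : ∀ m, (starRingEnd ℂ) (y m) * jacobiActRow n x m = A m + B m := by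
    intro m
    by_cases h : m = 0
    · subst h
      simp only [jacobiActRow, if_pos rfl, if_true, add_zero, mul_zero, hA, hB]
      try ring
    · simp only [jacobiActRow, if_neg h, hA, hB]
      ring
  have hR : ∀ m, (starRingEnd ℂ) (jacobiActRow n y m) * x m = A' m + B' m := by
    intro m
    by_cases h : m = 0
    · subst h
      simp only [jacobiActRow, if_pos rfl, if_true, add_zero, map_add, map_zero, map_mul,
        Complex.conj_ofReal, hA', hB']
      try ring
    · simp only [jacobiActRow, if_neg h, map_add, map_mul, Complex.conj_ofReal, hA', hB']
      ring
  calc ∑' m, (starRingEnd ℂ) (y m) * jacobiActRow n x m = ∑' m, (A m + B m) := by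
        simp only [hL]
    _ = ∑' m, A m + ∑' m, B m := Summable.tsum_add hsA hsB
    _ = ∑' m, A' m + ∑' m, B' m := by rw [hBA', hB'A]; ring
    _ = ∑' m, (A' m + B' m) := (Summable.tsum_add hsA' hsB').symm
    _ = ∑' m, (starRingEnd ℂ) (jacobiActRow n y m) * x m := by simp only [hR]

/-- Extracting the defining data from graph membership. -/
lemma graph_elim (T : H1 →ₗ.[ℂ] H1) (x y : H1) (h : (x, y) ∈ T.graph) :
    ∃ hx : x ∈ T.domain, T ⟨x, hx⟩ = y := by
  rw [LinearPMap.mem_graph_iff] at h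
  rcases h with ⟨a, ha1, ha2⟩
  have hx : x ∈ T.domain := by rw [show x = ↑a from ha1.symm]; exact a.2
  have hxa : (⟨x, hx⟩ : T.domain) = a := Subtype.ext (by exact ha1.symm)
  exact ⟨hx, by rw [hxa]; exact ha2⟩

set_option maxHeartbeats 1000000 in
set_option synthInstance.maxHeartbeats 400000 in
/-- For `n ≥ 2`, the Jacobi operator `J_n` (with domain the finitely supported
sequences) is symmetric but not essentially self-adjoint, and both deficiency
indices equal `1`. -/
theorem Jn_symmetric_deficiency_indices_one
    (n : ℕ) (hn : 2 ≤ n)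
    (J : H1 →ₗ.[ℂ] H1)
    (hdom : ∀ u : H1, u ∈ J.domain ↔ {m : ℕ | u m ≠ 0}.Finite)
    (hact : ∀ u : J.domain, ∀ m : ℕ, (J u : H1) m = jacobiActRow n (⇑(u : H1)) m) :
    (∀ f g : J.domain, ⟪(J f : H1), ((g : H1))⟫ = ⟪((f : H1)), (J g : H1)⟫) ∧
    ¬ IsSelfAdjoint J.closure ∧
    Module.finrank ℂ
      (LinearMap.ker (J.adjoint.toFun - Complex.I • J.adjoint.domain.subtype)) = 1 ∧
    Module.finrank ℂ
      (LinearMap.ker (J.adjoint.toFun + Complex.I • J.adjoint.domain.subtype)) = 1 := by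
  classical
  -- inner product formula
  have hinner : ∀ f g : H1, ⟪f, g⟫ = ∑' m, (starRingEnd ℂ) (f m) * g m := by
    intro f g; rw [lp.inner_eq_tsum]; simp [RCLike.inner_apply]
    exact tsum_congr fun m => mul_comm _ _
  have hfin : ∀ x : J.domain, {m : ℕ | (x : H1) m ≠ 0}.Finite := fun x => (hdom _).mp x.2
  have hJval : ∀ (x : J.domain) (y : H1),
      ⟪y, (J x : H1)⟫ = ∑' m, (starRingEnd ℂ) (jacobiActRow n (⇑y) m) * (x : H1) m := by
    intro x y
    rw [hinner]
    rw [show (∑' m, (starRingEnd ℂ) (y m) * (J x : H1) m)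
        = ∑' m, (starRingEnd ℂ) (y m) * jacobiActRow n (⇑(x:H1)) m from
      tsum_congr (fun m => by rw [hact x m])]
    exact rearrange n (⇑y) (⇑(x:H1)) (hfin x)
  -- symmetry
  have hsym : ∀ f g : J.domain, ⟪(J f : H1), ((g : H1))⟫ = ⟪((f : H1)), (J g : H1)⟫ := by
    intro f g
    rw [hinner, hJval g]
    exact tsum_congr fun m => by rw [hact f m]
  -- density of the domain
  have hdense : Dense (J.domain : Set H1) := by
    intro f
    have hs := lp.hasSum_single (E := fun _ : ℕ => ℂ) (p := 2) (by norm_num) f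
    refine mem_closure_of_tendsto hs (Filter.Eventually.of_forall (fun s => ?_))
    refine SetLike.mem_coe.mpr ((hdom _).mpr (s.finite_toSet.subset (fun m hm => ?_)))
    by_contra hms
    apply hm
    have : (∑ i ∈ s, lp.single 2 i (f i) : H1) m = ∑ i ∈ s, (lp.single 2 i (f i) : H1) m := by
      rw [lp.coeFn_sum]; simp
    rw [this]
    apply Finset.sum_eq_zero
    intro i hi
    exact lp.single_apply_ne (E := fun _ : ℕ => ℂ) 2 i (f i)
      (fun hmi => hms (by rw [hmi]; exact hi))
  -- membership in the adjoint domain with prescribed value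
  have hmemval : ∀ (y w : H1), (∀ m, jacobiActRow n (⇑y) m = w m) →
      ∃ hy : y ∈ J.adjoint.domain, J.adjoint ⟨y, hy⟩ = w := by
    intro y w hrel
    have hkey : ∀ x : J.domain, ⟪w, (x:H1)⟫ = ⟪y, (J x : H1)⟫ := by
      intro x
      rw [hinner, hJval x y]
      exact tsum_congr fun m => by rw [hrel m]
    have hy := LinearPMap.mem_adjoint_domain_of_exists y ⟨w, hkey⟩
    exact ⟨hy, LinearPMap.adjoint_apply_eq hdense _ hkey⟩
  -- every element of the adjoint domain satisfies the formal recurrence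
  have hrecadj : ∀ (y : J.adjoint.domain) (k : ℕ),
      jacobiActRow n (⇑(y:H1)) k = (J.adjoint y : H1) k := by
    intro y k
    have hekfin : {m : ℕ | (lp.single 2 k (1:ℂ) : H1) m ≠ 0}.Finite := by
      apply (Set.finite_singleton k).subset
      intro m hm
      by_contra hmk
      exact hm (lp.single_apply_ne (E := fun _ : ℕ => ℂ) 2 k (1:ℂ) hmk)
    set ek : J.domain := ⟨lp.single 2 k 1, (hdom _).mpr hekfin⟩ with hek
    have h1 : ⟪(J.adjoint y : H1), ((ek : H1))⟫ = ⟪((y : H1)), (J ek : H1)⟫ :=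
      LinearPMap.adjoint_isFormalAdjoint hdense y ek
    rw [hJval ek (y:H1)] at h1
    have h2 : ⟪(J.adjoint y : H1), ((ek : H1))⟫ = (starRingEnd ℂ) ((J.adjoint y : H1) k) := by
      show ⟪(J.adjoint y : H1), lp.single 2 k (1:ℂ)⟫ = _
      rw [lp.inner_single_right]
      simp [RCLike.inner_apply]
    have h3 : (∑' m, (starRingEnd ℂ) (jacobiActRow n (⇑(y:H1)) m) * (ek:H1) m)
        = (starRingEnd ℂ) (jacobiActRow n (⇑(y:H1)) k) := by
      have hekc : ((ek : H1) : ℕ → ℂ) = ⇑(lp.single (E := fun _ : ℕ => ℂ) 2 k (1:ℂ)) := rfl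
      rw [tsum_eq_single k]
      · rw [hekc, lp.single_apply_self, mul_one]
      · intro m hmk
        rw [hekc, lp.single_apply_ne (E := fun _ : ℕ => ℂ) 2 k _ hmk, mul_zero]
    have h4 : (starRingEnd ℂ) ((J.adjoint y : H1) k)
        = (starRingEnd ℂ) (jacobiActRow n (⇑(y:H1)) k) := h2.symm.trans (h1.trans h3)
    have := congrArg (starRingEnd ℂ) h4
    simpa using this.symm
  -- uniqueness of solutions of the recurrence
  have huniq : ∀ (c : ℂ) (y : H1), (∀ k, jacobiActRow n (⇑y) k = c * y k) → y 0 = 0 →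
      ∀ k, y k = 0 := by
    intro c y hy h0
    have key : ∀ k, y k = 0 ∧ y (k+1) = 0 := by
      intro k
      induction k with
      | zero =>
          refine ⟨h0, ?_⟩
          have := hy 0
          simp only [jacobiActRow, if_pos rfl, if_true, add_zero, h0, mul_zero] at this
          exact (mul_eq_zero.mp this).resolve_left (betaC_ne hn 0)
      | succ k ih =>
          refine ⟨ih.2, ?_⟩
          have := hy (k+1)
          simp only [jacobiActRow, Nat.succ_ne_zero, if_false, Nat.add_sub_cancel,
            ih.1, ih.2, mul_zero, add_zero] at this
          exact (mul_eq_zero.mp this).resolve_left (betaC_ne hn (k+1))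
    exact fun k => (key k).1
  -- eigenvectors of the adjoint
  have hUdata : ∀ c : ℂ, ‖c‖ ≤ 1 → ∃ U : H1, U 0 = 1 ∧
      ∃ hU : U ∈ J.adjoint.domain, J.adjoint ⟨U, hU⟩ = c • U := by
    intro c hc
    refine ⟨⟨sol n c, sol_memlp hn hc⟩, rfl, ?_⟩
    apply hmemval
    intro m
    have h1 : (⇑(⟨sol n c, sol_memlp hn hc⟩ : H1)) = sol n c := rfl
    rw [h1, sol_eigen hn m]
    rw [lp.coeFn_smul]
    rfl
  -- general deficiency-space computation
  have hKER : ∀ c : ℂ, ‖c‖ ≤ 1 →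
      Module.finrank ℂ
        (LinearMap.ker (J.adjoint.toFun - c • J.adjoint.domain.subtype)) = 1 := by
    intro c hc
    set T := J.adjoint.toFun - c • J.adjoint.domain.subtype with hT
    have hmemT : ∀ y : J.adjoint.domain, T y = (J.adjoint y : H1) - c • (y : H1) := fun y => rfl
    let eval0 : H1 →ₗ[ℂ] ℂ :=
      { toFun := fun f => f 0
        map_add' := fun f g => by simp only []; rw [lp.coeFn_add]; rfl
        map_smul' := fun a f => by simp only []; rw [lp.coeFn_smul]; rfl }
    let φ := eval0.comp (J.adjoint.domain.subtype.comp (LinearMap.ker T).subtype)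
    have hφ : ∀ y : LinearMap.ker T, φ y = ((y : J.adjoint.domain) : H1) 0 := fun y => rfl
    have hkermem : ∀ y : LinearMap.ker T,
        (J.adjoint (y : J.adjoint.domain) : H1) = c • ((y : J.adjoint.domain) : H1) := by
      intro y
      have h0 := LinearMap.mem_ker.mp y.2
      rw [hmemT] at h0
      exact sub_eq_zero.mp h0
    have hrecK : ∀ (y : LinearMap.ker T) (k : ℕ),
        jacobiActRow n (⇑((y : J.adjoint.domain) : H1)) k
          = c * ((y : J.adjoint.domain) : H1) k := by
      intro y k
      rw [hrecadj (y : J.adjoint.domain) k, hkermem y, lp.coeFn_smul]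
      rfl
    have hinj : Function.Injective φ := by
      rw [injective_iff_map_eq_zero]
      intro y hy0
      have hall := huniq c _ (hrecK y) (by rw [← hφ y]; exact hy0)
      have hzero : ((y : J.adjoint.domain) : H1) = 0 := lp.ext (funext hall)
      exact Subtype.ext (Subtype.ext hzero)
    obtain ⟨U, hU0, hUmem, hUval⟩ := hUdata c hc
    have hUker : (⟨U, hUmem⟩ : J.adjoint.domain) ∈ LinearMap.ker T := by
      rw [LinearMap.mem_ker, hmemT, hUval]
      exact sub_self _
    have hφU : φ ⟨⟨U, hUmem⟩, hUker⟩ = 1 := by rw [hφ]; exact hU0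
    have hsurj : Function.Surjective φ := by
      intro z
      exact ⟨z • ⟨⟨U, hUmem⟩, hUker⟩, by rw [map_smul, hφU, smul_eq_mul, mul_one]⟩
    have e := LinearEquiv.ofBijective φ ⟨hinj, hsurj⟩
    rw [e.finrank_eq, Module.finrank_self]
  -- closability
  have hclosable : J.IsClosable := by
    refine ⟨Submodule.toLinearPMap J.graph.topologicalClosure,
      (Submodule.toLinearPMap_graph_eq _ ?_).symm⟩
    intro p hp h1
    have hp' : p ∈ closure (J.graph : Set (H1 × H1)) := by
      rw [← Submodule.topologicalClosure_coe]; exact hp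
    obtain ⟨sq, hsqmem, hsqlim⟩ := mem_closure_iff_seq_limit.mp hp'
    apply hdense.eq_zero_of_inner_left ℂ
    intro v0 hv0
    let v : J.domain := ⟨v0, hv0⟩
    show ⟪p.2, (v:H1)⟫ = 0
    have hterm : ∀ k, ⟪(sq k).2, (v:H1)⟫ = ⟪(sq k).1, (J v : H1)⟫ := by
      intro k
      obtain ⟨hm, he⟩ := graph_elim J (sq k).1 (sq k).2 (by rw [Prod.mk.eta]; exact hsqmem k)
      rw [← he]
      exact hsym ⟨(sq k).1, hm⟩ v
    have hlim1 : Filter.Tendsto (fun k => ⟪(sq k).2, (v:H1)⟫) Filter.atTop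
        (nhds ⟪p.2, (v:H1)⟫) :=
      Filter.Tendsto.inner (hsqlim.snd_nhds) tendsto_const_nhds
    have hlim2 : Filter.Tendsto (fun k => ⟪(sq k).1, (J v : H1)⟫) Filter.atTop
        (nhds ⟪p.1, (J v : H1)⟫) :=
      Filter.Tendsto.inner (hsqlim.fst_nhds) tendsto_const_nhds
    have hlim2' : Filter.Tendsto (fun k => ⟪(sq k).2, (v:H1)⟫) Filter.atTop
        (nhds ⟪p.1, (J v : H1)⟫) := by
      simpa only [hterm] using hlim2
    have := tendsto_nhds_unique hlim1 hlim2'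
    rw [this, h1, inner_zero_left]
  -- non-self-adjointness
  have hnotsa : ¬ IsSelfAdjoint J.closure := by
    intro hSA
    have hAdense : Dense (J.closure.domain : Set H1) := hSA.dense_domain
    have hAeq : J.closure.adjoint = J.closure := hSA
    obtain ⟨U, hU0, hUmem, hUval⟩ := hUdata Complex.I (le_of_eq Complex.norm_I)
    have hkey : ∀ x : J.closure.domain,
        ⟪(Complex.I • U : H1), (x:H1)⟫ = ⟪U, (J.closure x : H1)⟫ := by
      intro x
      have hpair : ((x : H1), (J.closure x : H1)) ∈ closure (J.graph : Set (H1 × H1)) := by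
        rw [← Submodule.topologicalClosure_coe, hclosable.graph_closure_eq_closure_graph]
        exact J.closure.mem_graph x
      obtain ⟨sq, hsqmem, hsqlim⟩ := mem_closure_iff_seq_limit.mp hpair
      have hterm : ∀ k, ⟪(Complex.I • U : H1), (sq k).1⟫ = ⟪U, (sq k).2⟫ := by
        intro k
        obtain ⟨hm, he⟩ := graph_elim J (sq k).1 (sq k).2 (by rw [Prod.mk.eta]; exact hsqmem k)
        rw [← he]
        have h5 := LinearPMap.adjoint_isFormalAdjoint hdense ⟨U, hUmem⟩ ⟨(sq k).1, hm⟩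
        rw [hUval] at h5
        exact h5
      have hlim1 : Filter.Tendsto (fun k => ⟪(Complex.I • U : H1), (sq k).1⟫) Filter.atTop
          (nhds ⟪(Complex.I • U : H1), (x:H1)⟫) :=
        Filter.Tendsto.inner tendsto_const_nhds (hsqlim.fst_nhds)
      have hlim2 : Filter.Tendsto (fun k => ⟪U, (sq k).2⟫) Filter.atTop
          (nhds ⟪U, (J.closure x : H1)⟫) :=
        Filter.Tendsto.inner tendsto_const_nhds (hsqlim.snd_nhds)
      have hlim1' : Filter.Tendsto (fun k => ⟪U, (sq k).2⟫) Filter.atTop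
          (nhds ⟪(Complex.I • U : H1), (x:H1)⟫) := by
        simpa only [hterm] using hlim1
      exact tendsto_nhds_unique hlim1' hlim2
    have hmemA : U ∈ J.closure.adjoint.domain :=
      LinearPMap.mem_adjoint_domain_of_exists U ⟨Complex.I • U, hkey⟩
    have hvalA : J.closure.adjoint ⟨U, hmemA⟩ = Complex.I • U :=
      LinearPMap.adjoint_apply_eq hAdense _ hkey
    have hgr : (U, Complex.I • U) ∈ J.closure.adjoint.graph := by
      have := J.closure.adjoint.mem_graph ⟨U, hmemA⟩
      rw [hvalA] at this
      exact this
    rw [hAeq] at hgr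
    obtain ⟨hm2, he2⟩ := graph_elim J.closure U (Complex.I • U) hgr
    have hsymA := LinearPMap.adjoint_isFormalAdjoint hAdense ⟨U, hmemA⟩ ⟨U, hm2⟩
    rw [hvalA, he2] at hsymA
    rw [inner_smul_left, inner_smul_right] at hsymA
    have hIne : (starRingEnd ℂ) Complex.I ≠ Complex.I := by
      rw [Complex.conj_I]
      intro h
      have : (2:ℂ) * Complex.I = 0 := by linear_combination -h
      simp [Complex.I_ne_zero] at this
    have hUU : ⟪U, U⟫ = 0 := by
      by_contra hne
      exact hIne (mul_right_cancel₀ hne hsymA)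
    have hU00 : U = 0 := inner_self_eq_zero.mp hUU
    rw [hU00] at hU0
    have : ((0:H1) : ℕ → ℂ) 0 = 0 := by rw [lp.coeFn_zero]; rfl
    rw [this] at hU0
    exact zero_ne_one hU0
  refine ⟨hsym, hnotsa, hKER Complex.I (le_of_eq Complex.norm_I), ?_⟩
  have heq : J.adjoint.toFun + Complex.I • J.adjoint.domain.subtype
      = J.adjoint.toFun - (-Complex.I) • J.adjoint.domain.subtype := by
    rw [neg_smul, sub_neg_eq_add]
  rw [heq]
  exact hKER (-Complex.I) (by rw [norm_neg]; exact le_of_eq Complex.norm_I)
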